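/- Let X be a real Banach space, let f : X → ℝ be quasiconvex and densely continuous, and let m ∈ ℝ be the topological essential infimum of f. Then X \ F'_m is semi-open, i.e., X \ F'_m is contained in the closure of its interior (equivalently, in the closure of X \ closure(F'_m)), where F'_m = {x ∈ X : f(x) ≤ m}. -/

import Mathlib

open Filter Topology Set MeasureTheory

/-- `f` is quasiconvex: `f (l•x + (1-l)•y) ≤ max (f x) (f y)` for `l ∈ [0,1]`. -/
def QuasiconvexFun {X : Type*} [AddCommGroup X] [Module ℝ X] (f : X → ℝ) : Prop :=
  ∀ x y : X, ∀ l : ℝ, l ∈ Set.Icc (0 : ℝ) 1 →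
    f (l • x + (1 - l) • y) ≤ max (f x) (f y)

/-- `f` is strictly quasiconvex. -/
def StrictlyQuasiconvexFun {X : Type*} [AddCommGroup X] [Module ℝ X] (f : X → ℝ) : Prop :=
  ∀ x y : X, x ≠ y → ∀ l : ℝ, l ∈ Set.Ioo (0 : ℝ) 1 →
    f (l • x + (1 - l) • y) < max (f x) (f y)

/-- `f` is densely continuous: its set of points of continuity is dense. -/
def DenselyContinuous {X : Type*} [TopologicalSpace X] (f : X → ℝ) : Prop :=
  Dense {x : X | ContinuousAt f x}

/-- `m` is the topological essential infimum of `f`: the strict sublevel set `{f < α}`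
is meager for `α < m` and nonmeager for `α > m`. -/
def IsTopEssInf {X : Type*} [TopologicalSpace X] (f : X → ℝ) (m : ℝ) : Prop :=
  (∀ α : ℝ, α < m → IsMeagre {x : X | f x < α}) ∧
  (∀ α : ℝ, m < α → ¬ IsMeagre {x : X | f x < α})

/-- Aronszajn null set: a Borel set `N` such that for every sequence `ξ` with dense linear
span, `N` decomposes as a countable union of Borel sets, the `n`-th of which has Lebesgue
null intersection with every line of direction `ξ n`. -/
def AronszajnNull {X : Type*} [NormedAddCommGroup X] [NormedSpace ℝ X]
    [MeasurableSpace X] (N : Set X) : Prop :=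
  MeasurableSet N ∧
  ∀ ξ : ℕ → X, Dense (Submodule.span ℝ (Set.range ξ) : Set X) →
    ∃ Nn : ℕ → Set X, N = ⋃ n, Nn n ∧
      ∀ n, MeasurableSet (Nn n) ∧
        ∀ x : X, MeasureTheory.volume {t : ℝ | x + t • ξ n ∈ Nn n} = 0

/-- Haar null set: `E` is contained in a Borel set `B` for which there is a Borel
probability measure vanishing on all translates of `B`. -/
def HaarNull {X : Type*} [AddCommGroup X] [TopologicalSpace X]
    [MeasurableSpace X] (E : Set X) : Prop :=
  ∃ B : Set X, E ⊆ B ∧ MeasurableSet B ∧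
    ∃ μ : MeasureTheory.Measure X, MeasureTheory.IsProbabilityMeasure μ ∧
      ∀ x : X, μ ((fun y => x + y) '' B) = 0

/-- Hadamard differentiability of `f` at `x`. -/
def HadamardDiffAt {X : Type*} [NormedAddCommGroup X] [NormedSpace ℝ X]
    (f : X → ℝ) (x : X) : Prop :=
  ∃ L : X →L[ℝ] ℝ, ∀ h : X, ∀ t : ℕ → ℝ, (∀ n, t n ≠ 0) →
    Tendsto t atTop (𝓝 0) → ∀ hs : ℕ → X, Tendsto hs atTop (𝓝 h) →
      Tendsto (fun n => (f (x + t n • hs n) - f x) / t n) atTop (𝓝 (L h))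

/-- Hadamard differentiability at `x` of a function whose relevant values are those on `V`. -/
def HadamardDiffWithinAt {X : Type*} [NormedAddCommGroup X] [NormedSpace ℝ X]
    (f : X → ℝ) (V : Set X) (x : X) : Prop :=
  ∃ L : X →L[ℝ] ℝ, ∀ h : X, ∀ t : ℕ → ℝ, (∀ n, t n ≠ 0) →
    Tendsto t atTop (𝓝 0) → ∀ hs : ℕ → X, Tendsto hs atTop (𝓝 h) →
      (∀ n, x + t n • hs n ∈ V) →
      Tendsto (fun n => (f (x + t n • hs n) - f x) / t n) atTop (𝓝 (L h))

/-- Gâteaux differentiability of `f` at `x` with derivative `L`. -/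
def GateauxDiffAt {X : Type*} [NormedAddCommGroup X] [NormedSpace ℝ X]
    (f : X → ℝ) (x : X) (L : X →L[ℝ] ℝ) : Prop :=
  ∀ h : X, Tendsto (fun t : ℝ => (f (x + t • h) - f x) / t) (𝓝[≠] 0) (𝓝 (L h))

/-- Essential Gâteaux differentiability of `f` at `x`: directional derivatives exist and
are given by a continuous linear functional for a comeager (residual) set of directions
in the unit sphere. -/
def EssGateauxDiffAt {X : Type*} [NormedAddCommGroup X] [NormedSpace ℝ X]
    (f : X → ℝ) (x : X) : Prop :=
  ∃ L : X →L[ℝ] ℝ, ∃ Ω : Set (Metric.sphere (0 : X) 1), IsMeagre Ωᶜ ∧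
    ∀ h ∈ Ω, Tendsto (fun t : ℝ => (f (x + t • (h : X)) - f x) / t) (𝓝[≠] 0) (𝓝 (L (h : X)))

/-- `K` is a closed convex cone. -/
def IsClosedConvexCone {X : Type*} [NormedAddCommGroup X] [NormedSpace ℝ X] (K : Set X) : Prop :=
  IsClosed K ∧ Convex ℝ K ∧ ∀ l : ℝ, 0 ≤ l → ∀ k ∈ K, l • k ∈ K

/-- `f` is `K`-nondecreasing on `U`. -/
def KNondecreasingOn {X : Type*} [AddCommGroup X] [Module ℝ X]
    (f : X → ℝ) (K U : Set X) : Prop :=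
  ∀ u ∈ U, ∀ k ∈ K, k ≠ 0 → u + k ∈ U → f u ≤ f (u + k)

/-- Ideally convex subset: stable under infinite convex combinations of bounded sequences. -/
def IdeallyConvex {X : Type*} [NormedAddCommGroup X] [NormedSpace ℝ X] (C : Set X) : Prop :=
  ∀ (x : ℕ → X) (lam : ℕ → ℝ), (∀ n, x n ∈ C) → Bornology.IsBounded (Set.range x) →
    (∀ n, lam n ∈ Set.Icc (0 : ℝ) 1) → HasSum lam 1 →
      ∑' n, lam n • x n ∈ C

/-- `C‡`: the union, over finite dimensional subspaces `Z ⊆ X`, of the closures of `C ∩ Z`. -/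
def Ddag {X : Type*} [NormedAddCommGroup X] [NormedSpace ℝ X] (C : Set X) : Set X :=
  ⋃ (Z : Submodule ℝ X) (_ : FiniteDimensional ℝ Z), closure (C ∩ (Z : Set X))

/-- A normed space is reflexive if the canonical inclusion into its double dual is onto. -/
def IsReflexiveSpace (X : Type*) [NormedAddCommGroup X] [NormedSpace ℝ X] : Prop :=
  Function.Surjective (NormedSpace.inclusionInDoubleDual ℝ X)

/-- The complement of `{f ≤ m}` is semi-open: it is contained in the closure of its
interior. -/
theorem stmt_3 {X : Type*} [NormedAddCommGroup X] [NormedSpace ℝ X] [CompleteSpace X]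
    (f : X → ℝ) (hq : QuasiconvexFun f) (hd : DenselyContinuous f)
    (m : ℝ) (hm : IsTopEssInf f m) :
    {x : X | f x ≤ m}ᶜ ⊆ closure (interior ({x : X | f x ≤ m}ᶜ)) := by
  intro x hx
  simp only [Set.mem_compl_iff, Set.mem_setOf_eq, not_le] at hx
  have hd' : Dense {x : X | ContinuousAt f x} := hd
  by_cases hcl : x ∈ closure ((closure {y : X | f y ≤ m})ᶜ)
  · exact closure_mono (interior_maximal
      (Set.compl_subset_compl.mpr subset_closure) isClosed_closure.isOpen_compl) hcl
  · have hx2 : x ∈ interior (closure {y : X | f y ≤ m}) := by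
      rw [closure_compl, Set.mem_compl_iff, not_not] at hcl
      exact hcl
    rw [mem_interior_iff_mem_nhds, Metric.mem_nhds_iff] at hx2
    obtain ⟨r, hr, hball⟩ := hx2
    rw [Metric.mem_closure_iff]
    intro ε hε
    obtain ⟨p, hpc, hpball⟩ := hd'.exists_mem_open Metric.isOpen_ball
      (Metric.nonempty_ball.mpr hε)
    have hpc : ContinuousAt f p := hpc
    set s : ℝ := ε / r with hs
    have hs0 : 0 < s := div_pos hε hr
    have hs1 : (0:ℝ) < 1 + s := by linarith
    -- p is in the closure of {z | f x ≤ f z}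
    have hpS : p ∈ closure {z : X | f x ≤ f z} := by
      rw [Metric.mem_closure_iff]
      intro δ hδ
      set y : X := (1/s) • ((1+s) • x - p) with hy
      have hyx : y - x = (1/s) • (x - p) := by
        rw [hy]; match_scalars <;> field_simp <;> ring
      have hyball : y ∈ Metric.ball x r := by
        rw [Metric.mem_ball, dist_eq_norm, hyx, norm_smul, Real.norm_eq_abs]
        have hpx : ‖x - p‖ < ε := by
          rw [← dist_eq_norm, dist_comm, ← Metric.mem_ball]; exact hpball
        have : |1/s| = 1/s := abs_of_pos (by positivity)
        rw [this]
        calc (1/s) * ‖x - p‖ < (1/s) * ε := by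
              exact mul_lt_mul_of_pos_left hpx (by positivity)
          _ = r := by rw [hs]; field_simp
      obtain ⟨y', hy'C, hy'd⟩ := Metric.mem_closure_iff.mp (hball hyball) (δ/s)
        (div_pos hδ hs0)
      refine ⟨(1+s) • x - s • y', ?_, ?_⟩
      · -- quasiconvexity
        have hl : (1/(1+s)) ∈ Set.Icc (0:ℝ) 1 := by
          constructor
          · positivity
          · rw [div_le_one hs1]; linarith
        have key := hq ((1+s) • x - s • y') y' (1/(1+s)) hl
        have harg : (1/(1+s)) • ((1+s) • x - s • y') + (1 - 1/(1+s)) • y' = x := by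
          match_scalars <;> field_simp <;> ring
        rw [harg] at key
        rcases le_max_iff.mp key with h | h
        · exact h
        · exact absurd (h.trans hy'C) (not_le.mpr hx)
      · -- distance
        have hpz : p - ((1+s) • x - s • y') = s • (y' - y) := by
          rw [hy]; match_scalars <;> field_simp
        rw [dist_eq_norm, hpz, norm_smul, Real.norm_eq_abs, abs_of_pos hs0,
          ← dist_eq_norm, dist_comm y' y]
        calc s * dist y y' < s * (δ/s) := mul_lt_mul_of_pos_left hy'd hs0
          _ = δ := by field_simp
    -- f x ≤ f p by continuity
    have hfp : f x ≤ f p := by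
      by_contra h
      push_neg at h
      have hnb : f ⁻¹' Set.Iio (f x) ∈ 𝓝 p := hpc.preimage_mem_nhds (Iio_mem_nhds h)
      obtain ⟨z, hz1, hz2⟩ := mem_closure_iff_nhds.mp hpS _ hnb
      have h1 : f z < f x := hz1
      have h2 : f x ≤ f z := hz2
      linarith
    refine ⟨p, ?_, ?_⟩
    · rw [mem_interior_iff_mem_nhds]
      have : f ⁻¹' Set.Ioi m ∈ 𝓝 p :=
        hpc.preimage_mem_nhds (Ioi_mem_nhds (lt_of_lt_of_le hx hfp))
      refine Filter.mem_of_superset this (fun z hz => ?_)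
      simp only [Set.mem_compl_iff, Set.mem_setOf_eq, not_le]
      exact hz
    · rw [dist_comm, ← Metric.mem_ball]; exact hpball
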